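/- Let X be a real Banach space, let A, B : X →L[ℝ] X be bounded linear operators that commute (A ∘ B = B ∘ A), let τ > 0, and let ℓ ≥ 1 be an integer. Then τ·φ_ℓ(τ·(A+B)) − ℓ!·τ·φ_ℓ(τ·A) ∘ φ_ℓ(τ·B) = (ℓ/(τ^{2ℓ−1}·(ℓ−1)!)) · ∫_{s∈[0,τ]} ∫_{σ∈[0,τ]} ∫_{ξ∈[s,σ]} (σ·s)^{ℓ−1} · (τ−s) · exp((τ−ξ)·A) ∘ φ₁((τ−s)·B) ∘ B ∘ A dξ dσ ds, where the inner integral over ξ from s to σ is an oriented (interval) integral. -/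

import Mathlib

open MeasureTheory intervalIntegral NormedSpace
open scoped Nat

set_option synthInstance.maxHeartbeats 1000000
set_option maxHeartbeats 1000000
set_option linter.unusedSectionVars false

/-- The operator `φ_ℓ(T) = ∑_{k=0}^∞ T^k / (ℓ+k)!` (for `ℓ = 0` this is `exp T`). -/
noncomputable def phi {X : Type*} [NormedAddCommGroup X] [NormedSpace ℝ X] [CompleteSpace X]
    (ℓ : ℕ) (T : X →L[ℝ] X) : X →L[ℝ] X :=
  ∑' k : ℕ, (((ℓ + k)! : ℝ)⁻¹) • T ^ k

section aux
variable {X : Type*} [NormedAddCommGroup X] [NormedSpace ℝ X] [CompleteSpace X]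
local notation "𝔸" => X →L[ℝ] X

lemma beta_step (a b : ℕ) (τ : ℝ) :
    ∫ s in (0:ℝ)..τ, s ^ a * (τ - s) ^ (b + 1)
      = ((b : ℝ) + 1) / ((a : ℝ) + 1) * ∫ s in (0:ℝ)..τ, s ^ (a + 1) * (τ - s) ^ b := by
  have hu : ∀ x ∈ Set.uIcc (0:ℝ) τ, HasDerivAt (fun x : ℝ => (τ - x) ^ (b + 1))
      (-(((b:ℝ)+1) * (τ - x) ^ b)) x := by
    intro x _
    have h1 : HasDerivAt (fun x : ℝ => τ - x) (-1) x := (hasDerivAt_id x).const_sub τ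
    have := h1.fun_pow (b + 1)
    simpa [mul_comm, mul_assoc, mul_left_comm] using this
  have hv : ∀ x ∈ Set.uIcc (0:ℝ) τ, HasDerivAt (fun x : ℝ => x ^ (a + 1) / ((a:ℝ)+1))
      (x ^ a) x := by
    intro x _
    have := (hasDerivAt_pow (a + 1) x).div_const ((a:ℝ)+1)
    have ha : ((a:ℝ) + 1) ≠ 0 := by positivity
    simpa [mul_comm, mul_div_assoc, mul_div_cancel_left₀, ha] using this
  have hint1 : IntervalIntegrable (fun x : ℝ => -(((b:ℝ)+1) * (τ - x) ^ b)) volume 0 τ :=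
    (Continuous.intervalIntegrable (by continuity) 0 τ)
  have hint2 : IntervalIntegrable (fun x : ℝ => x ^ a) volume 0 τ :=
    (Continuous.intervalIntegrable (by continuity) 0 τ)
  have key := intervalIntegral.integral_mul_deriv_eq_deriv_mul hu hv hint1 hint2
  have h3 : (∫ x in (0:ℝ)..τ, -(((b:ℝ)+1) * (τ - x) ^ b) * (x ^ (a + 1) / ((a:ℝ)+1)))
      = (-(((b:ℝ)+1) / ((a:ℝ)+1))) * ∫ x in (0:ℝ)..τ, x ^ (a+1) * (τ - x) ^ b := by
    rw [← intervalIntegral.integral_const_mul]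
    apply intervalIntegral.integral_congr; intro x _; dsimp; ring
  have h0 : (∫ s in (0:ℝ)..τ, s ^ a * (τ - s) ^ (b + 1))
      = ∫ s in (0:ℝ)..τ, (τ - s) ^ (b + 1) * s ^ a := by
    apply intervalIntegral.integral_congr; intro x _; dsimp; ring
  rw [h0, key, h3]
  rw [sub_self, zero_pow (Nat.succ_ne_zero b), zero_pow (Nat.succ_ne_zero a)]
  ring

lemma beta_nat : ∀ (b a : ℕ) (τ : ℝ), ∫ s in (0:ℝ)..τ, s ^ a * (τ - s) ^ b
    = ((a)! * (b)! / ((a + b + 1)! : ℝ)) * τ ^ (a + b + 1) := by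
  intro b
  induction b with
  | zero =>
    intro a τ
    simp only [pow_zero, mul_one, integral_pow, Nat.factorial_zero, Nat.cast_one,
      Nat.add_zero]
    rw [Nat.factorial_succ]
    push_cast
    rw [zero_pow (by omega)]
    field_simp
    ring
  | succ b ih =>
    intro a τ
    rw [beta_step, ih (a + 1) τ]
    have h1 : a + 1 + b + 1 = a + (b + 1) + 1 := by omega
    rw [h1]
    rw [Nat.factorial_succ (a), Nat.factorial_succ b]
    push_cast
    have h2 : ((a:ℝ) + 1) ≠ 0 := by positivity
    field_simp

lemma norm_pow_le_pow (T : 𝔸) (k : ℕ) : ‖T ^ k‖ ≤ ‖T‖ ^ k := by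
  cases k with
  | zero => simp only [pow_zero]; exact ContinuousLinearMap.norm_id_le
  | succ n => exact norm_pow_le' T n.succ_pos

lemma phi_summable (ℓ : ℕ) (T : 𝔸) :
    Summable fun k : ℕ => (((ℓ + k)! : ℝ)⁻¹) • T ^ k := by
  refine Summable.of_norm_bounded (g := fun k => ‖T‖ ^ k / (k)!)
    (Real.summable_pow_div_factorial ‖T‖) (fun k => ?_)
  rw [norm_smul ((((ℓ+k)! : ℝ))⁻¹) (T^k), div_eq_inv_mul]
  have h1 : ‖(((ℓ + k)! : ℝ)⁻¹)‖ ≤ (((k)! : ℝ))⁻¹ := by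
    rw [Real.norm_eq_abs, abs_of_nonneg (by positivity)]
    exact inv_anti₀ (by positivity)
      (by exact_mod_cast Nat.factorial_le (Nat.le_add_left k ℓ))
  have h2 : ‖T ^ k‖ ≤ ‖T‖ ^ k := by
    cases k with
    | zero => simp only [pow_zero]; exact ContinuousLinearMap.norm_id_le
    | succ n => exact norm_pow_le' T n.succ_pos
  exact mul_le_mul h1 h2 (norm_nonneg _) (by positivity)

lemma commute_phi {S T : 𝔸} (h : Commute S T) (ℓ : ℕ) : Commute S (phi ℓ T) :=
  Commute.tsum_right _ fun k => ((h.pow_right k).smul_right _)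

lemma phi_one_mul (T : 𝔸) : (phi 1 T) * T = exp T - 1 := by
  have hs := phi_summable 1 T
  rw [phi, ← hs.tsum_mul_right]
  have h1 : ∀ k : ℕ, (((1 + k)! : ℝ)⁻¹) • T ^ k * T = (((k + 1)! : ℝ)⁻¹) • T ^ (k + 1) := by
    intro k
    rw [smul_mul_assoc, ← pow_succ, add_comm 1 k]
  simp only [h1]
  have hsum : Summable fun k : ℕ => (((k)! : ℝ)⁻¹) • T ^ k := by
    simpa using phi_summable 0 T
  have hexp : exp T = ∑' k : ℕ, (((k)! : ℝ)⁻¹) • T ^ k := by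
    rw [exp_eq_tsum ℝ]
  rw [hexp, Summable.tsum_eq_zero_add hsum]
  simp

lemma rep (T : 𝔸) {ℓ : ℕ} (hℓ : 1 ≤ ℓ) {τ : ℝ} (hτ : 0 < τ) :
    (∫ s in (0:ℝ)..τ, s ^ (ℓ - 1) • exp ((τ - s) • T))
      = ((((ℓ - 1)! : ℝ)) * τ ^ ℓ) • phi ℓ (τ • T) := by
  set f : ℕ → C(ℝ, 𝔸) := fun k =>
    ⟨fun s => ((s ^ (ℓ - 1) * (τ - s) ^ k) * (((k)! : ℝ)⁻¹)) • T ^ k, by fun_prop⟩ with hf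
  have hsum : Summable fun k : ℕ =>
      ‖(f k).restrict (⟨Set.uIcc (0:ℝ) τ, isCompact_uIcc⟩ : TopologicalSpace.Compacts ℝ)‖ := by
    refine Summable.of_nonneg_of_le (fun k => by positivity)
      (fun k => ?_) (((Real.summable_pow_div_factorial (τ * ‖T‖)).mul_left (τ ^ (ℓ - 1))))
    rw [ContinuousMap.norm_le _ (by positivity)]
    rintro ⟨x, hx⟩
    rw [TopologicalSpace.Compacts.coe_mk, Set.uIcc_of_le hτ.le] at hx
    simp only [ContinuousMap.restrict_apply, ContinuousMap.coe_mk, hf]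
    rw [norm_smul (x ^ (ℓ - 1) * (τ - x) ^ k * (((k)! : ℝ)⁻¹)) (T ^ k)]
    have h1 : ‖x ^ (ℓ - 1) * (τ - x) ^ k * (((k)! : ℝ)⁻¹)‖
        ≤ τ ^ (ℓ - 1) * τ ^ k * (((k)! : ℝ)⁻¹) := by
      rw [Real.norm_eq_abs, abs_mul, abs_mul, abs_pow, abs_pow,
        abs_of_nonneg (a := (((k)! : ℝ)⁻¹)) (by positivity)]
      have hx1 : |x| ≤ τ := by rw [abs_of_nonneg hx.1]; exact hx.2
      have hx2 : |τ - x| ≤ τ := by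
        rw [abs_of_nonneg (by linarith [hx.2] : (0:ℝ) ≤ τ - x)]; linarith [hx.1]
      exact mul_le_mul (mul_le_mul (pow_le_pow_left₀ (abs_nonneg x) hx1 _)
        (pow_le_pow_left₀ (abs_nonneg _) hx2 _) (by positivity) (by positivity))
        le_rfl (by positivity) (by positivity)
    calc ‖x ^ (ℓ - 1) * (τ - x) ^ k * (((k)! : ℝ)⁻¹)‖ * ‖T ^ k‖
        ≤ (τ ^ (ℓ - 1) * τ ^ k * (((k)! : ℝ)⁻¹)) * ‖T‖ ^ k := by
          exact mul_le_mul h1 (norm_pow_le_pow T k) (norm_nonneg _) (by positivity)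
      _ = τ ^ (ℓ - 1) * ((τ * ‖T‖) ^ k / (k)!) := by rw [mul_pow]; ring
  have H := intervalIntegral.hasSum_intervalIntegral_of_summable_norm (a := (0:ℝ)) (b := τ) hsum
  have hts : ∀ x : ℝ, (∑' k, f k x) = x ^ (ℓ - 1) • exp ((τ - x) • T) := by
    intro x
    rw [exp_eq_tsum ℝ, ← Summable.tsum_const_smul (x ^ (ℓ - 1) : ℝ)
      (expSeries_summable' (𝕂 := ℝ) ((τ - x) • T))]
    congr 1; funext k
    simp only [ContinuousMap.coe_mk, smul_pow, smul_smul, hf]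
    congr 1
    ring
  have hint : ∀ k, (∫ x in (0:ℝ)..τ, f k x)
      = ((((ℓ - 1)! : ℝ)) * τ ^ ℓ) • ((((ℓ + k)! : ℝ)⁻¹) • (τ • T) ^ k) := by
    intro k
    simp only [ContinuousMap.coe_mk, hf]
    rw [intervalIntegral.integral_smul_const, intervalIntegral.integral_mul_const,
      beta_nat k (ℓ - 1) τ]
    have he : ℓ - 1 + k + 1 = ℓ + k := by omega
    rw [he, smul_pow, smul_smul, smul_smul]
    congr 1
    have h2 : ((k)! : ℝ) ≠ 0 := by positivity
    have h3 : (((ℓ + k)!) : ℝ) ≠ 0 := by positivity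
    have h4 : τ ^ (ℓ + k) = τ ^ ℓ * τ ^ k := by rw [pow_add]
    field_simp
    ring
  simp only [hts] at H
  simp only [hint] at H
  have H2 : HasSum (fun k : ℕ => ((((ℓ - 1)! : ℝ)) * τ ^ ℓ) • ((((ℓ + k)! : ℝ)⁻¹) • (τ • T) ^ k))
      (((((ℓ - 1)! : ℝ)) * τ ^ ℓ) • phi ℓ (τ • T)) :=
    (phi_summable ℓ (τ • T)).hasSum.const_smul _
  exact H.unique H2

lemma integral_const_mul_op {f : ℝ → 𝔸} {a b : ℝ} (hf : IntervalIntegrable f volume a b)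
    (c : 𝔸) : ∫ x in a..b, c * f x = c * ∫ x in a..b, f x := by
  simpa using (((ContinuousLinearMap.mul ℝ 𝔸) c).intervalIntegral_comp_comm hf)

lemma integral_op_mul_const {f : ℝ → 𝔸} {a b : ℝ} (hf : IntervalIntegrable f volume a b)
    (c : 𝔸) : ∫ x in a..b, f x * c = (∫ x in a..b, f x) * c := by
  simpa using (((ContinuousLinearMap.mul ℝ 𝔸).flip c).intervalIntegral_comp_comm hf)

lemma cont_exp_aux (A : 𝔸) (τ : ℝ) : Continuous (fun s : ℝ => exp ((τ - s) • A)) :=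
  by let +nondep : NormedAlgebra ℚ 𝔸 := .restrictScalars ℚ ℝ 𝔸
     exact exp_continuous.comp ((continuous_const.sub continuous_id).fun_smul continuous_const)

lemma ftc_exp (A : 𝔸) (τ s σ : ℝ) (C : 𝔸) :
    ∫ ξ in s..σ, exp ((τ - ξ) • A) * A * C
      = exp ((τ - s) • A) * C - exp ((τ - σ) • A) * C := by
  have hderiv : ∀ ξ ∈ Set.uIcc s σ, HasDerivAt (fun ξ : ℝ => -(exp ((τ - ξ) • A) * C))
      (exp ((τ - ξ) • A) * A * C) ξ := by
    intro ξ _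
    have h1 : HasDerivAt (fun u : ℝ => exp (u • A)) (exp ((τ - ξ) • A) * A) (τ - ξ) :=
      hasDerivAt_exp_smul_const A (τ - ξ)
    have h2 : HasDerivAt (fun x : ℝ => τ - x) (-1) ξ := (hasDerivAt_id ξ).const_sub τ
    have h3 := h1.scomp ξ h2
    have h4 := (h3.mul_const C).fun_neg
    simpa [neg_smul, one_smul, smul_mul_assoc, Function.comp] using h4
  rw [intervalIntegral.integral_eq_sub_of_hasDerivAt hderiv
    ((((cont_exp_aux A τ).fun_mul continuous_const).fun_mul continuous_const).intervalIntegrable s σ)]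
  abel

end aux

theorem stmt17 {X : Type*} [NormedAddCommGroup X] [NormedSpace ℝ X] [CompleteSpace X]
    (A B : X →L[ℝ] X) (hcomm : A.comp B = B.comp A) (τ : ℝ) (hτ : 0 < τ)
    (ℓ : ℕ) (hℓ : 1 ≤ ℓ) :
    τ • phi ℓ (τ • (A + B)) - (((ℓ)! : ℝ) * τ) • (phi ℓ (τ • A)).comp (phi ℓ (τ • B)) =
      ((ℓ : ℝ) / (τ ^ (2 * ℓ - 1) * ((ℓ - 1)! : ℝ))) •
        ∫ s in (0:ℝ)..τ, ∫ σ in (0:ℝ)..τ, ∫ ξ in s..σ,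
          ((σ * s) ^ (ℓ - 1) * (τ - s)) •
            ((NormedSpace.exp ((τ - ξ) • A)).comp
              ((phi 1 ((τ - s) • B)).comp (B.comp A))) := by
  have hAB : Commute A B := by
    show A * B = B * A
    simp only [ContinuousLinearMap.mul_def]; exact hcomm
  simp only [← ContinuousLinearMap.mul_def]
  have hcEA : Continuous (fun s : ℝ => exp ((τ - s) • A)) := cont_exp_aux A τ
  have hcEB : Continuous (fun s : ℝ => exp ((τ - s) • B)) := cont_exp_aux B τ
  -- Step 1 : the inner ξ-integral
  have inner : ∀ s σ : ℝ,
      (∫ ξ in s..σ, ((σ * s) ^ (ℓ - 1) * (τ - s)) •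
        ((exp ((τ - ξ) • A)) * ((phi 1 ((τ - s) • B)) * (B * A))))
      = (σ ^ (ℓ - 1) * s ^ (ℓ - 1)) •
          ((exp ((τ - s) • A) - exp ((τ - σ) • A)) * (exp ((τ - s) • B) - 1)) := by
    intro s σ
    set P : X →L[ℝ] X := phi 1 ((τ - s) • B) with hP
    have hPA : Commute A P := commute_phi (hAB.smul_right _) 1
    have hAPB : Commute A (P * B) := hPA.mul_right hAB
    have hrw : ∀ ξ : ℝ, exp ((τ - ξ) • A) * (P * (B * A))
        = exp ((τ - ξ) • A) * A * (P * B) := by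
      intro ξ
      have h1 : P * (B * A) = A * (P * B) := by
        rw [← mul_assoc, ← hAPB.eq]
      rw [h1, ← mul_assoc]
    have hPB : (τ - s) • (P * B) = exp ((τ - s) • B) - 1 := by
      rw [← mul_smul_comm, phi_one_mul]
    rw [intervalIntegral.integral_smul]
    simp only [hrw]
    rw [ftc_exp A τ s σ (P * B), ← sub_mul]
    rw [show (exp ((τ - s) • A) - exp ((τ - σ) • A)) * (exp ((τ - s) • B) - 1)
        = (exp ((τ - s) • A) - exp ((τ - σ) • A)) * ((τ - s) • (P * B)) by rw [hPB],
      mul_smul_comm, smul_smul]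
    congr 1
    ring
  -- Step 2 : the σ-integral
  have houter : ∀ s : ℝ,
      (∫ σ in (0:ℝ)..τ, (σ ^ (ℓ - 1) * s ^ (ℓ - 1)) •
          ((exp ((τ - s) • A) - exp ((τ - σ) • A)) * (exp ((τ - s) • B) - 1)))
      = (τ ^ ℓ / ℓ * s ^ (ℓ - 1)) • (exp ((τ - s) • A) * (exp ((τ - s) • B) - 1))
        - (((((ℓ - 1)! : ℝ)) * τ ^ ℓ) • phi ℓ (τ • A)) *
            (s ^ (ℓ - 1) • (exp ((τ - s) • B) - 1)) := by
    intro s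
    have hsplit : ∀ σ : ℝ, (σ ^ (ℓ - 1) * s ^ (ℓ - 1)) •
          ((exp ((τ - s) • A) - exp ((τ - σ) • A)) * (exp ((τ - s) • B) - 1))
        = (σ ^ (ℓ - 1)) • ((s ^ (ℓ - 1)) •
              (exp ((τ - s) • A) * (exp ((τ - s) • B) - 1)))
          - (σ ^ (ℓ - 1) • exp ((τ - σ) • A)) *
              (s ^ (ℓ - 1) • (exp ((τ - s) • B) - 1)) := by
      intro σ
      rw [smul_mul_smul_comm, smul_smul, ← smul_sub, ← sub_mul]
    simp only [hsplit]
    rw [intervalIntegral.integral_sub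
      (((continuous_pow _).fun_smul continuous_const).intervalIntegrable 0 τ)
      ((((continuous_pow _).fun_smul hcEA).fun_mul continuous_const).intervalIntegrable 0 τ)]
    rw [_root_.intervalIntegral.integral_smul_const, integral_pow,
      integral_op_mul_const (((continuous_pow _).fun_smul hcEA).intervalIntegrable 0 τ),
      rep A hℓ hτ]
    congr 1
    rw [smul_smul]
    congr 1
    rw [zero_pow (by omega : ℓ - 1 + 1 ≠ 0), sub_zero,
      show ℓ - 1 + 1 = ℓ from by omega]
    have hℓR : ((ℓ - 1 : ℕ) : ℝ) + 1 = (ℓ : ℝ) := by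
      rw [Nat.cast_sub (by omega : 1 ≤ ℓ)]; ring
    rw [hℓR]
  -- Step 3 : the outer s-integral and final algebra
  simp only [inner]
  simp only [houter]
  have hsplit2 : ∀ s : ℝ,
      (τ ^ ℓ / ℓ * s ^ (ℓ - 1)) • (exp ((τ - s) • A) * (exp ((τ - s) • B) - 1))
        - (((((ℓ - 1)! : ℝ)) * τ ^ ℓ) • phi ℓ (τ • A)) *
            (s ^ (ℓ - 1) • (exp ((τ - s) • B) - 1))
      = ((τ ^ ℓ / ℓ) • (s ^ (ℓ - 1) • exp ((τ - s) • (A + B)))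
          - (τ ^ ℓ / ℓ) • (s ^ (ℓ - 1) • exp ((τ - s) • A)))
        - ((((((ℓ - 1)! : ℝ)) * τ ^ ℓ) • phi ℓ (τ • A)) *
              (s ^ (ℓ - 1) • exp ((τ - s) • B))
            - s ^ (ℓ - 1) • (((((ℓ - 1)! : ℝ)) * τ ^ ℓ) • phi ℓ (τ • A))) := by
    intro s
    have hadd : exp ((τ - s) • A) * exp ((τ - s) • B) = exp ((τ - s) • (A + B)) := by
      rw [smul_add]
      let +nondep : NormedAlgebra ℚ (X →L[ℝ] X) := .restrictScalars ℚ ℝ (X →L[ℝ] X)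
      exact (exp_add_of_commute ((hAB.smul_left _).smul_right _)).symm
    rw [← hadd]
    simp only [mul_sub, smul_sub, smul_smul, mul_smul_comm, mul_one]
  simp only [hsplit2]
  have c1 : Continuous fun s : ℝ =>
      (τ ^ ℓ / ℓ) • (s ^ (ℓ - 1) • exp ((τ - s) • (A + B))) :=
    ((continuous_pow _).fun_smul (cont_exp_aux (A + B) τ)).fun_const_smul _
  have c2 : Continuous fun s : ℝ =>
      (τ ^ ℓ / ℓ) • (s ^ (ℓ - 1) • exp ((τ - s) • A)) :=
    ((continuous_pow _).fun_smul hcEA).fun_const_smul _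
  have c3 : Continuous fun s : ℝ =>
      (((((ℓ - 1)! : ℝ)) * τ ^ ℓ) • phi ℓ (τ • A)) * (s ^ (ℓ - 1) • exp ((τ - s) • B)) :=
    continuous_const.fun_mul ((continuous_pow _).fun_smul hcEB)
  have c4 : Continuous fun s : ℝ =>
      s ^ (ℓ - 1) • (((((ℓ - 1)! : ℝ)) * τ ^ ℓ) • phi ℓ (τ • A)) :=
    (continuous_pow _).fun_smul continuous_const
  rw [intervalIntegral.integral_sub
      ((c1.intervalIntegrable 0 τ).sub (c2.intervalIntegrable 0 τ))
      ((c3.intervalIntegrable 0 τ).sub (c4.intervalIntegrable 0 τ)),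
    intervalIntegral.integral_sub (c1.intervalIntegrable 0 τ) (c2.intervalIntegrable 0 τ),
    intervalIntegral.integral_sub (c3.intervalIntegrable 0 τ) (c4.intervalIntegrable 0 τ),
    intervalIntegral.integral_smul, intervalIntegral.integral_smul,
    rep (A + B) hℓ hτ, rep A hℓ hτ,
    integral_const_mul_op (((continuous_pow _).fun_smul hcEB).intervalIntegrable 0 τ),
    rep B hℓ hτ,
    _root_.intervalIntegral.integral_smul_const, integral_pow]
  have hℓR2 : ((ℓ - 1 : ℕ) : ℝ) + 1 = (ℓ : ℝ) := by
    rw [Nat.cast_sub (by omega : 1 ≤ ℓ)]; ring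
  rw [zero_pow (by omega : ℓ - 1 + 1 ≠ 0), sub_zero, show ℓ - 1 + 1 = ℓ from by omega,
    hℓR2, smul_mul_smul_comm]
  have hτ' : τ ≠ 0 := ne_of_gt hτ
  have hℓ0 : (ℓ : ℝ) ≠ 0 := by positivity
  have hf0 : (((ℓ - 1)! : ℕ) : ℝ) ≠ 0 := by positivity
  have hfact : ((ℓ)! : ℝ) = (ℓ : ℝ) * (((ℓ - 1)! : ℕ) : ℝ) := by
    exact_mod_cast congrArg (Nat.cast (R := ℝ)) (Nat.mul_factorial_pred (by omega)).symm
  have hA1 : τ ^ ℓ = τ ^ (ℓ - 1) * τ := by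
    rw [← pow_succ, show ℓ - 1 + 1 = ℓ from by omega]
  have hA2 : τ ^ (2 * ℓ - 1) = τ ^ (ℓ - 1) * τ ^ (ℓ - 1) * τ := by
    rw [show 2 * ℓ - 1 = (ℓ - 1) + (ℓ - 1) + 1 from by omega, pow_succ, pow_add]
  have hτℓ : τ ^ (ℓ - 1) ≠ 0 := pow_ne_zero _ hτ'
  match_scalars
  all_goals rw [hA1, hA2]
  all_goals try rw [hfact]
  all_goals field_simp
  all_goals try ring
  all_goals tauto
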